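/- Let n < m and let Z = Z(n,m) : ℝⁿ → ℝᵐ be the wrinkled-embedding model. For every point p = (y₀,z₀) with |y₀|² + z₀² = 1, the normalized partial derivative v(y,z) = (∂Z/∂z)(y,z) / ‖(∂Z/∂z)(y,z)‖ converges, as (y,z) → p within the region {|y|² + z² > 1}, to the standard unit vector e ∈ ℝᵐ in the n-th coordinate direction (the coordinate carrying z³ + 3(|y|²−1)z), and converges, as (y,z) → p within the region {|y|² + z² < 1}, to −e. In particular the limiting tangent line, and hence the limiting tangent n-plane of Z, exists at every singular point. -/

import Mathlib

open Filter Topology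

/-- The wrinkled-embedding model `Z(n,m) : ℝⁿ → ℝᵐ`,
`Z(y,z) = (y, z³ + 3(|y|² − 1)z, ∫₀ᶻ (s² + |y|² − 1)² ds, 0, …, 0)`,
where `ℝⁿ = ℝ^{n−1} × ℝ` (so `k = n−1`) and the `m − n − 1` trailing zeros are
collected in a Euclidean factor (so `l = m − n − 1`). -/
noncomputable def Zmap (k l : ℕ) (p : EuclideanSpace ℝ (Fin k) × ℝ) :
    EuclideanSpace ℝ (Fin k) × ℝ × ℝ × EuclideanSpace ℝ (Fin l) :=
  (p.1, p.2^3 + 3*(‖p.1‖^2 - 1)*p.2,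
    ∫ s in (0:ℝ)..p.2, (s^2 + ‖p.1‖^2 - 1)^2, 0)

lemma Zmap_hasDerivAt (k l : ℕ) (y : EuclideanSpace ℝ (Fin k)) (z : ℝ) :
    HasDerivAt (fun z => Zmap k l (y, z))
      ((0 : EuclideanSpace ℝ (Fin k)), 3*(‖y‖^2 + z^2 - 1),
        (‖y‖^2 + z^2 - 1)^2, (0 : EuclideanSpace ℝ (Fin l))) z := by
  unfold Zmap
  refine (hasDerivAt_const z y).prodMk (HasDerivAt.prodMk ?_ (HasDerivAt.prodMk ?_ (hasDerivAt_const z 0)))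
  · have h1 := hasDerivAt_pow 3 z
    have h2 : HasDerivAt (fun z : ℝ => 3*(‖y‖^2-1)*z) (3*(‖y‖^2-1)) z := by
      simpa using (hasDerivAt_id z).const_mul (3*(‖y‖^2-1))
    refine (h1.add h2).congr_deriv ?_
    push_cast
    ring
  · have hc : Continuous (fun s : ℝ => (s^2 + ‖y‖^2 - 1)^2) := by continuity
    have := intervalIntegral.integral_hasDerivAt_right (f := fun s : ℝ => (s^2 + ‖y‖^2 - 1)^2) (a := 0) (b := z)
      (hc.intervalIntegrable 0 z)
      (hc.aestronglyMeasurable.stronglyMeasurableAtFilter)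
      hc.continuousAt
    convert this using 1
    ring

lemma norm_mk4 (k l : ℕ) (a b : ℝ) :
    ‖(((0:EuclideanSpace ℝ (Fin k)), a, b, (0:EuclideanSpace ℝ (Fin l))) :
      EuclideanSpace ℝ (Fin k) × ℝ × ℝ × EuclideanSpace ℝ (Fin l))‖ = max |a| |b| := by
  simp only [Prod.norm_def, Real.norm_eq_abs, norm_zero]
  rw [max_eq_left (abs_nonneg b), max_eq_right (le_max_of_le_left (abs_nonneg a))]

/-- At every singular point `p` (`|y|² + z² = 1`) of the model `Z(n,m)`, the
normalized partial derivative `v = (∂Z/∂z)/‖∂Z/∂z‖` tends to the unit vector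
`e` in the `n`-th coordinate direction as `(y,z) → p` within `{|y|² + z² > 1}`,
and tends to `−e` within `{|y|² + z² < 1}`. In particular the limiting tangent
line (hence the limiting tangent `n`-plane) exists at every singular point. -/
theorem Zmap_normalized_partial_limit (n m : ℕ) (hn : 1 ≤ n) (hnm : n < m)
    (p : EuclideanSpace ℝ (Fin (n - 1)) × ℝ) (hp : ‖p.1‖^2 + p.2^2 = 1) :
    Tendsto
      (fun q : EuclideanSpace ℝ (Fin (n - 1)) × ℝ =>
        ‖deriv (fun z => Zmap (n - 1) (m - n - 1) (q.1, z)) q.2‖⁻¹ •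
          deriv (fun z => Zmap (n - 1) (m - n - 1) (q.1, z)) q.2)
      (𝓝[{q : EuclideanSpace ℝ (Fin (n - 1)) × ℝ | ‖q.1‖^2 + q.2^2 > 1}] p)
      (𝓝 ((0, 1, 0, 0) :
        EuclideanSpace ℝ (Fin (n - 1)) × ℝ × ℝ × EuclideanSpace ℝ (Fin (m - n - 1)))) ∧
    Tendsto
      (fun q : EuclideanSpace ℝ (Fin (n - 1)) × ℝ =>
        ‖deriv (fun z => Zmap (n - 1) (m - n - 1) (q.1, z)) q.2‖⁻¹ •
          deriv (fun z => Zmap (n - 1) (m - n - 1) (q.1, z)) q.2)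
      (𝓝[{q : EuclideanSpace ℝ (Fin (n - 1)) × ℝ | ‖q.1‖^2 + q.2^2 < 1}] p)
      (𝓝 (-((0, 1, 0, 0) :
        EuclideanSpace ℝ (Fin (n - 1)) × ℝ × ℝ × EuclideanSpace ℝ (Fin (m - n - 1))))) := by
  set w : EuclideanSpace ℝ (Fin (n - 1)) × ℝ → ℝ := fun q => ‖q.1‖^2 + q.2^2 - 1 with hw
  have hwc : Continuous w := by
    apply Continuous.sub _ continuous_const
    exact ((continuous_fst.norm.pow 2).add (continuous_snd.pow 2))
  have hwp : w p = 0 := by simp only [hw]; linarith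
  have hwt : Tendsto w (𝓝 p) (𝓝 0) := hwp ▸ hwc.continuousAt
  have hderiv : ∀ q : EuclideanSpace ℝ (Fin (n - 1)) × ℝ,
      deriv (fun z => Zmap (n - 1) (m - n - 1) (q.1, z)) q.2
        = ((0:EuclideanSpace ℝ (Fin (n - 1))), 3*(w q), (w q)^2,
            (0:EuclideanSpace ℝ (Fin (m - n - 1)))) := by
    intro q
    have h := (Zmap_hasDerivAt (n - 1) (m - n - 1) q.1 q.2).deriv
    rw [h]
  constructor
  · have heq : (fun q : EuclideanSpace ℝ (Fin (n - 1)) × ℝ =>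
        (((0:EuclideanSpace ℝ (Fin (n - 1))), (1:ℝ), w q / 3,
          (0:EuclideanSpace ℝ (Fin (m - n - 1)))) :
          EuclideanSpace ℝ (Fin (n - 1)) × ℝ × ℝ × EuclideanSpace ℝ (Fin (m - n - 1))))
        =ᶠ[𝓝[{q : EuclideanSpace ℝ (Fin (n - 1)) × ℝ | ‖q.1‖^2 + q.2^2 > 1}] p]
        (fun q : EuclideanSpace ℝ (Fin (n - 1)) × ℝ =>
          ‖deriv (fun z => Zmap (n - 1) (m - n - 1) (q.1, z)) q.2‖⁻¹ •
            deriv (fun z => Zmap (n - 1) (m - n - 1) (q.1, z)) q.2) := by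
      have h3 : ∀ᶠ q in 𝓝[{q : EuclideanSpace ℝ (Fin (n - 1)) × ℝ | ‖q.1‖^2 + q.2^2 > 1}] p,
          w q < 3 := (hwt.mono_left nhdsWithin_le_nhds).eventually
            (Filter.Tendsto.eventually_lt_const (by norm_num) tendsto_id)
      filter_upwards [h3, self_mem_nhdsWithin] with q h3 hmem
      have hpos : 0 < w q := by simp only [hw]; simpa using hmem
      rw [hderiv q, norm_mk4 (n - 1) (m - n - 1)]
      have hmax : max |3 * w q| |(w q)^2| = 3 * w q := by
        rw [abs_of_pos (by linarith), abs_of_nonneg (sq_nonneg _)]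
        apply max_eq_left; nlinarith
      rw [hmax, Prod.smul_def, Prod.smul_def, Prod.smul_def]
      have hne : (3 * w q) ≠ 0 := by positivity
      simp only [smul_zero, smul_eq_mul, Prod.mk.injEq]
      refine ⟨trivial, ?_, ?_, trivial⟩
      · field_simp
      · field_simp
    apply Tendsto.congr' heq
    apply Tendsto.mono_left _ nhdsWithin_le_nhds
    have h0 : Tendsto (fun q => w q / 3) (𝓝 p) (𝓝 0) := by
      simpa using hwt.div_const 3
    exact tendsto_const_nhds.prodMk_nhds (tendsto_const_nhds.prodMk_nhds
      (h0.prodMk_nhds tendsto_const_nhds))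
  · have hneg : (-((0, 1, 0, 0) :
        EuclideanSpace ℝ (Fin (n - 1)) × ℝ × ℝ × EuclideanSpace ℝ (Fin (m - n - 1))))
        = ((0:EuclideanSpace ℝ (Fin (n - 1))), (-1:ℝ), (0:ℝ),
            (0:EuclideanSpace ℝ (Fin (m - n - 1)))) := by
      simp [Prod.neg_mk]
    rw [hneg]
    have heq : (fun q : EuclideanSpace ℝ (Fin (n - 1)) × ℝ =>
        (((0:EuclideanSpace ℝ (Fin (n - 1))), (-1:ℝ), -(w q) / 3,
          (0:EuclideanSpace ℝ (Fin (m - n - 1)))) :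
          EuclideanSpace ℝ (Fin (n - 1)) × ℝ × ℝ × EuclideanSpace ℝ (Fin (m - n - 1))))
        =ᶠ[𝓝[{q : EuclideanSpace ℝ (Fin (n - 1)) × ℝ | ‖q.1‖^2 + q.2^2 < 1}] p]
        (fun q : EuclideanSpace ℝ (Fin (n - 1)) × ℝ =>
          ‖deriv (fun z => Zmap (n - 1) (m - n - 1) (q.1, z)) q.2‖⁻¹ •
            deriv (fun z => Zmap (n - 1) (m - n - 1) (q.1, z)) q.2) := by
      have h3 : ∀ᶠ q in 𝓝[{q : EuclideanSpace ℝ (Fin (n - 1)) × ℝ | ‖q.1‖^2 + q.2^2 < 1}] p,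
          -3 < w q := (hwt.mono_left nhdsWithin_le_nhds).eventually
            (Filter.Tendsto.eventually_const_lt (by norm_num) tendsto_id)
      filter_upwards [h3, self_mem_nhdsWithin] with q h3 hmem
      have hneg' : w q < 0 := by simp only [hw]; simpa using hmem
      rw [hderiv q, norm_mk4 (n - 1) (m - n - 1)]
      have hmax : max |3 * w q| |(w q)^2| = -(3 * w q) := by
        rw [abs_of_neg (by linarith), abs_of_nonneg (sq_nonneg _)]
        apply max_eq_left; nlinarith
      rw [hmax, Prod.smul_def, Prod.smul_def, Prod.smul_def]
      have hne : -(3 * w q) ≠ 0 := ne_of_gt (by linarith)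
      simp only [smul_zero, smul_eq_mul, Prod.mk.injEq]
      refine ⟨trivial, ?_, ?_, trivial⟩
      · field_simp; rw [div_self (ne_of_lt hneg')]
      · field_simp
    apply Tendsto.congr' heq
    apply Tendsto.mono_left _ nhdsWithin_le_nhds
    have h0 : Tendsto (fun q => -(w q) / 3) (𝓝 p) (𝓝 0) := by
      simpa using hwt.neg.div_const 3
    exact tendsto_const_nhds.prodMk_nhds (tendsto_const_nhds.prodMk_nhds
      (h0.prodMk_nhds tendsto_const_nhds))
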